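/- Let Σ be a symmetric positive semidefinite real N×N matrix and b, m ∈ ℝ^N with bᵀΣm ≥ mᵀΣm. Then for every target risk level σ_g with mᵀΣm ≤ σ_g ≤ bᵀΣb, there exists γ ∈ [0,1] such that σᵃ(γ) = σ_g; moreover, if mᵀΣm < bᵀΣb, this γ is unique. -/

import Mathlib

open Matrix

/-- fine-grained risk control. Under the first-order optimality
condition `bᵀΣm ≥ mᵀΣm`, every target risk `σ_g ∈ [mᵀΣm, bᵀΣb]` is attained by
some interpolation weight `γ ∈ [0,1]`; if moreover `mᵀΣm < bᵀΣb`, this `γ` is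
unique. -/
theorem risk_control_exists_unique
    (N : ℕ) (hN : 1 ≤ N) (S : Matrix (Fin N) (Fin N) ℝ) (hS : S.PosSemidef)
    (b m : Fin N → ℝ) (h : m ⬝ᵥ (S *ᵥ m) ≤ b ⬝ᵥ (S *ᵥ m))
    (σg : ℝ) (h₁ : m ⬝ᵥ (S *ᵥ m) ≤ σg) (h₂ : σg ≤ b ⬝ᵥ (S *ᵥ b)) :
    (∃ γ ∈ Set.Icc (0 : ℝ) 1,
        ((1 - γ) • b + γ • m) ⬝ᵥ (S *ᵥ ((1 - γ) • b + γ • m)) = σg) ∧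
      (m ⬝ᵥ (S *ᵥ m) < b ⬝ᵥ (S *ᵥ b) →
        ∀ γ₁ ∈ Set.Icc (0 : ℝ) 1, ∀ γ₂ ∈ Set.Icc (0 : ℝ) 1,
          ((1 - γ₁) • b + γ₁ • m) ⬝ᵥ (S *ᵥ ((1 - γ₁) • b + γ₁ • m)) = σg →
          ((1 - γ₂) • b + γ₂ • m) ⬝ᵥ (S *ᵥ ((1 - γ₂) • b + γ₂ • m)) = σg →
          γ₁ = γ₂) := by
  have sym : ∀ x y : Fin N → ℝ, x ⬝ᵥ (S *ᵥ y) = y ⬝ᵥ (S *ᵥ x) := by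
    intro x y
    rw [Matrix.dotProduct_mulVec, ← Matrix.mulVec_transpose,
      ← Matrix.conjTranspose_eq_transpose_of_trivial, hS.isHermitian.eq]
    exact dotProduct_comm _ _
  set B : ℝ := b ⬝ᵥ (S *ᵥ b) with hB
  set L : ℝ := b ⬝ᵥ (S *ᵥ (m - b)) with hL
  set Q : ℝ := (m - b) ⬝ᵥ (S *ᵥ (m - b)) with hQdef
  have key : ∀ γ : ℝ, ((1 - γ) • b + γ • m) ⬝ᵥ (S *ᵥ ((1 - γ) • b + γ • m))
      = B + 2 * γ * L + γ ^ 2 * Q := by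
    intro γ
    have hv : (1 - γ) • b + γ • m = b + γ • (m - b) := by module
    rw [hv]
    simp only [Matrix.mulVec_add, Matrix.mulVec_smul, add_dotProduct,
      smul_dotProduct, dotProduct_add, dotProduct_smul, smul_eq_mul]
    rw [show (m - b) ⬝ᵥ (S *ᵥ b) = b ⬝ᵥ (S *ᵥ (m - b)) from sym _ _]
    ring
  have hQ : 0 ≤ Q := by simpa only [star_trivial] using hS.dotProduct_mulVec_nonneg (m - b)
  have hM : m ⬝ᵥ (S *ᵥ m) = B + 2 * L + Q := by
    have := key 1
    simpa using this
  have hLQ : L + Q ≤ 0 := by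
    have hmd : m ⬝ᵥ (S *ᵥ (m - b)) = L + Q := by
      have : m ⬝ᵥ (S *ᵥ (m - b)) = (b + (m - b)) ⬝ᵥ (S *ᵥ (m - b)) := by
        congr 1; abel
      rw [this, add_dotProduct]
    have hms : m ⬝ᵥ (S *ᵥ (m - b)) = m ⬝ᵥ (S *ᵥ m) - m ⬝ᵥ (S *ᵥ b) := by
      rw [Matrix.mulVec_sub, dotProduct_sub]
    rw [hms, sym m b] at hmd
    linarith [hmd, h]
  constructor
  · -- existence via IVT on g γ = B + 2γL + γ²Q
    have hcont : ContinuousOn (fun γ : ℝ => B + 2 * γ * L + γ ^ 2 * Q) (Set.Icc 0 1) :=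
      (((continuous_const.add ((continuous_const.mul continuous_id).mul
        continuous_const)).add ((continuous_pow 2).mul continuous_const)).continuousOn)
    have hIVT := intermediate_value_Icc' (by norm_num : (0:ℝ) ≤ 1) hcont
    have hmem : σg ∈ Set.Icc ((fun γ : ℝ => B + 2 * γ * L + γ ^ 2 * Q) 1)
        ((fun γ : ℝ => B + 2 * γ * L + γ ^ 2 * Q) 0) := by
      have e1 : B + 2 * 1 * L + 1 ^ 2 * Q = m ⬝ᵥ (S *ᵥ m) := by rw [hM]; ring
      constructor
      · simp only; linarith [h₁, e1]
      · simp only; linarith [h₂]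
    obtain ⟨γ, hγ, hgγ⟩ := hIVT hmem
    exact ⟨γ, hγ, by rw [key γ]; exact hgγ⟩
  · intro hMB γ₁ hγ₁ γ₂ hγ₂ e₁ e₂
    rw [key γ₁] at e₁
    rw [key γ₂] at e₂
    have h2LQ : 2 * L + Q < 0 := by rw [hM] at hMB; linarith
    by_contra hne
    have hfac : 2 * L + (γ₁ + γ₂) * Q = 0 := by
      have hdiff : (γ₁ - γ₂) * (2 * L + (γ₁ + γ₂) * Q) = 0 := by nlinarith [e₁, e₂]
      rcases mul_eq_zero.mp hdiff with h' | h'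
      · exact absurd (by linarith : γ₁ = γ₂) hne
      · exact h'
    obtain ⟨hg1l, hg1u⟩ := hγ₁
    obtain ⟨hg2l, hg2u⟩ := hγ₂
    -- from hfac and h2LQ: (γ₁+γ₂-1)Q > 0 so Q > 0 and γ₁+γ₂ > 1
    -- from hfac and hLQ: (2-(γ₁+γ₂))Q ≤ 0, so γ₁+γ₂ ≥ 2, so γ₁=γ₂=1, contradiction
    have hQpos : 0 < Q := by nlinarith
    have hs2 : 2 ≤ γ₁ + γ₂ := by nlinarith
    have : γ₁ = 1 ∧ γ₂ = 1 := by constructor <;> linarith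
    exact hne (by rw [this.1, this.2])
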